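/- If a strictly feasible pair exists, then at every minimizer (p*, y*) of the network delay, for every node n and any two data links l, m outgoing from n, the marginal quantities are equal: g_l(p*_l) = g_m(p*_m), where g_l(p) = (t_l/(2σ_l)) · ((1/2)·ln(1 + p/σ_l) − t_l)^{−2} · (1 + p/σ_l)^{−1}. -/

import Mathlib

open BigOperators ENNReal

/-- A single-slot energy harvesting network with energy cooperation: nodes `N`,
data links `L` (each with a start node, fixed flow `t l > 0` and noise power `σ l > 0`),
energy links `Q` (each with a start node, end node and transfer efficiency `α q ∈ (0,1]`),
and harvested energies `E n ≥ 0`. -/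
structure Net where
  N : Type
  L : Type
  Q : Type
  [fintypeN : Fintype N]
  [fintypeL : Fintype L]
  [fintypeQ : Fintype Q]
  [decEqN : DecidableEq N]
  startD : L → N
  startE : Q → N
  endE : Q → N
  α : Q → ℝ
  t : L → ℝ
  σ : L → ℝ
  E : N → ℝ
  hα : ∀ q, 0 < α q ∧ α q ≤ 1
  ht : ∀ l, 0 < t l
  hσ : ∀ l, 0 < σ l
  hE : ∀ n, 0 ≤ E n

attribute [instance] Net.fintypeN Net.fintypeL Net.fintypeQ Net.decEqN

/-- A pair `(p, y)` is feasible: nonnegative energy transfers, link powers at least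
`σ_l (e^{2 t_l} − 1)`, and the energy constraint at every node. -/
def Net.Feasible (net : Net) (p : net.L → ℝ) (y : net.Q → ℝ) : Prop :=
  (∀ q, 0 ≤ y q) ∧
  (∀ l, net.σ l * (Real.exp (2 * net.t l) - 1) ≤ p l) ∧
  (∀ n : net.N,
    (∑ l ∈ Finset.univ.filter (fun l => net.startD l = n), p l) +
      (∑ q ∈ Finset.univ.filter (fun q => net.startE q = n), y q) ≤
    net.E n + ∑ q ∈ Finset.univ.filter (fun q => net.endE q = n), net.α q * y q)

/-- Strict feasibility: feasible with `p_l > σ_l (e^{2 t_l} − 1)` on every data link. -/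
def Net.StrictFeasible (net : Net) (p : net.L → ℝ) (y : net.Q → ℝ) : Prop :=
  net.Feasible p y ∧ ∀ l, net.σ l * (Real.exp (2 * net.t l) - 1) < p l

/-- The network delay `D(p) = ∑_l t_l / ((1/2)·ln(1 + p_l/σ_l) − t_l)`, with the
convention that it is `+∞` if `(1/2)·ln(1 + p_l/σ_l) ≤ t_l` for some link `l`. -/
noncomputable def Net.Delay (net : Net) (p : net.L → ℝ) : ℝ≥0∞ :=
  if ∀ l, net.t l < (1 / 2) * Real.log (1 + p l / net.σ l) then
    ENNReal.ofReal (∑ l, net.t l / ((1 / 2) * Real.log (1 + p l / net.σ l) - net.t l))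
  else ⊤

/-- A minimizer of the network delay over feasible pairs. -/
def Net.IsMinimizer (net : Net) (p : net.L → ℝ) (y : net.Q → ℝ) : Prop :=
  net.Feasible p y ∧ ∀ p' y', net.Feasible p' y' → net.Delay p ≤ net.Delay p'

/-- The marginal quantity
`g(p) = (t/(2σ)) · ((1/2)·ln(1 + p/σ) − t)^{−2} · (1 + p/σ)^{−1}`. -/
noncomputable def gMarg (t σ p : ℝ) : ℝ :=
  t / (2 * σ) / ((1 / 2) * Real.log (1 + p / σ) - t) ^ 2 / (1 + p / σ)


private lemma keyEq' {σ p : ℝ} (hσ : 0 < σ) : σ * (1 + p / σ) = σ + p := by field_simp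

private lemma cond_of_lb' {σ t p : ℝ} (hσ : 0 < σ) (h : σ * (Real.exp (2 * t) - 1) < p) :
    t < (1/2) * Real.log (1 + p / σ) := by
  have hk := keyEq' (p := p) hσ
  have h1 : Real.exp (2*t) < 1 + p / σ := by nlinarith
  have := Real.log_lt_log (Real.exp_pos _) h1
  rw [Real.log_exp] at this; linarith

private lemma upos_of_lb' {σ t p : ℝ} (hσ : 0 < σ) (hle : σ * (Real.exp (2 * t) - 1) ≤ p) :
    (0:ℝ) < 1 + p / σ := by
  have hk := keyEq' (p := p) hσ
  have h1 : Real.exp (2*t) ≤ 1 + p / σ := by nlinarith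
  exact lt_of_lt_of_le (Real.exp_pos _) h1

private lemma lb_of_cond' {σ t p : ℝ} (hσ : 0 < σ) (hle : σ * (Real.exp (2 * t) - 1) ≤ p)
    (h : t < (1/2) * Real.log (1 + p / σ)) : σ * (Real.exp (2 * t) - 1) < p := by
  have hk := keyEq' (p := p) hσ
  have hpos : (0:ℝ) < 1 + p / σ := upos_of_lb' hσ hle
  have h2 : Real.exp (2*t) < Real.exp (Real.log (1 + p/σ)) := Real.exp_lt_exp.2 (by linarith)
  rw [Real.exp_log hpos] at h2
  nlinarith

private lemma hasDerivAt_term' (t σ pk ck : ℝ) (hσ : 0 < σ)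
    (hu : 0 < 1 + pk / σ)
    (hw : 0 < (1/2) * Real.log (1 + pk/σ) - t) :
    HasDerivAt (fun ε => t / ((1/2) * Real.log (1 + (pk + ck*ε)/σ) - t))
      (-(ck * gMarg t σ pk)) 0 := by
  have e1 : pk + ck * 0 = pk := by ring
  have h1 : HasDerivAt (fun ε : ℝ => 1 + (pk + ck*ε)/σ) (ck/σ) 0 := by
    have : HasDerivAt (fun ε : ℝ => ck * ε) ck 0 := by
      simpa using (hasDerivAt_id (0:ℝ)).const_mul ck
    simpa using (((this.const_add pk).div_const σ).const_add 1)
  have h2 : HasDerivAt (fun ε : ℝ => (1/2) * Real.log (1 + (pk + ck*ε)/σ) - t)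
      ((1/2) * ((ck/σ) / (1 + pk/σ))) 0 := by
    have hl := (h1.log (by simp only [e1]; exact hu.ne'))
    simp only [e1] at hl
    exact (hl.const_mul (1/2)).sub_const t
  have h3 := (hasDerivAt_const (0:ℝ) t).div h2 (by simp only [e1]; exact hw.ne')
  simp only [e1] at h3
  refine h3.congr_deriv ?_
  rw [gMarg]
  set u := 1 + pk / σ with hud
  set w := (1/2 : ℝ) * Real.log u - t with hwd
  have hw' : w ≠ 0 := by rw [hwd]; exact hw.ne'
  field_simp
  ring

private lemma eventually_good' (t σ pk ck : ℝ) (hσ : 0 < σ)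
    (hlb : σ * (Real.exp (2 * t) - 1) < pk) :
    ∀ᶠ ε in nhds (0:ℝ), σ * (Real.exp (2 * t) - 1) < pk + ck * ε ∧
      t < (1/2) * Real.log (1 + (pk + ck * ε)/σ) := by
  have hcont : ContinuousAt (fun ε : ℝ => pk + ck * ε) 0 := by fun_prop
  have h0 : σ * (Real.exp (2 * t) - 1) < (fun ε : ℝ => pk + ck * ε) 0 := by simpa using hlb
  have h1 := hcont.eventually (eventually_gt_nhds h0)
  exact h1.mono fun ε hε => ⟨hε, cond_of_lb' hσ hε⟩

/-- If a strictly feasible pair exists, then at every minimizer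
`(p*, y*)` of the network delay, for every node `n` and any two outgoing data
links `l, m` of `n`, the marginal quantities are equal: `g_l(p*_l) = g_m(p*_m)`. -/
theorem minimizer_equal_marginals (net : Net)
    (hsf : ∃ p y, net.StrictFeasible p y)
    (pstar : net.L → ℝ) (ystar : net.Q → ℝ)
    (hmin : net.IsMinimizer pstar ystar) :
    ∀ (n : net.N) (l m : net.L), net.startD l = n → net.startD m = n →
      gMarg (net.t l) (net.σ l) (pstar l) = gMarg (net.t m) (net.σ m) (pstar m) := by
  classical
  intro n l m hl hm
  by_cases hlm : l = m
  · rw [hlm]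
  obtain ⟨p0, y0, hsf0⟩ := hsf
  obtain ⟨⟨hy, hp, hn⟩, hle2⟩ := hmin
  -- finiteness of the minimum delay
  have hcond0 : ∀ k, net.t k < (1/2) * Real.log (1 + p0 k / net.σ k) :=
    fun k => cond_of_lb' (net.hσ k) (hsf0.2 k)
  have hfin : net.Delay pstar ≠ ⊤ := by
    have h0 : net.Delay p0 ≠ ⊤ := by
      rw [Net.Delay, if_pos hcond0]; exact ENNReal.ofReal_ne_top
    exact fun h => h0 (top_le_iff.1 (h ▸ hle2 p0 y0 hsf0.1))
  have hI : ∀ k, net.t k < (1/2) * Real.log (1 + pstar k / net.σ k) := by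
    by_contra h
    exact hfin (by rw [Net.Delay, if_neg h])
  have hlbS : ∀ k, net.σ k * (Real.exp (2 * net.t k) - 1) < pstar k :=
    fun k => lb_of_cond' (net.hσ k) (hp k) (hI k)
  have hu : ∀ k, 0 < 1 + pstar k / net.σ k :=
    fun k => upos_of_lb' (net.hσ k) (hp k)
  have hw : ∀ k, 0 < (1/2) * Real.log (1 + pstar k / net.σ k) - net.t k :=
    fun k => sub_pos.2 (hI k)
  -- the perturbation direction
  set c : net.L → ℝ := fun k => (if k = l then (-1:ℝ) else 0) + (if k = m then 1 else 0)
    with hc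
  have hcl : c l = -1 := by simp [hc, hlm]
  have hml : m ≠ l := fun h => hlm h.symm
  have hcm : c m = 1 := by simp [hc, hml]
  have hc0 : ∀ k, k ≠ l → k ≠ m → c k = 0 := by
    intro k h1 h2; simp [hc, h1, h2]
  -- the one-dimensional delay function
  set F : ℝ → ℝ := fun ε => ∑ k, net.t k /
      ((1/2) * Real.log (1 + (pstar k + c k * ε) / net.σ k) - net.t k) with hFdef
  -- its derivative at 0
  set G : net.L → ℝ := fun k => gMarg (net.t k) (net.σ k) (pstar k) with hG
  have hder : HasDerivAt F (G l - G m) 0 := by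
    have h1 : HasDerivAt F (∑ k, -(c k * G k)) 0 :=
      HasDerivAt.fun_sum fun k _ => hasDerivAt_term' _ _ _ _ (net.hσ k) (hu k) (hw k)
    have h2 : ∑ k, -(c k * G k) = G l - G m := by
      have he : ∀ k, -(c k * G k) =
          (if k = l then G k else 0) - (if k = m then G k else 0) := by
        intro k
        simp only [hc]
        split_ifs <;> ring
      rw [Finset.sum_congr rfl fun k _ => he k, Finset.sum_sub_distrib,
        Finset.sum_ite_eq' Finset.univ l G, Finset.sum_ite_eq' Finset.univ m G]
      simp
    rwa [h2] at h1
  -- 0 is a local minimum of F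
  have hloc : IsLocalMin F 0 := by
    have hev := (eventually_good' (net.t l) (net.σ l) (pstar l) (c l) (net.hσ l) (hlbS l)).and
      (eventually_good' (net.t m) (net.σ m) (pstar m) (c m) (net.hσ m) (hlbS m))
    refine hev.mono fun ε hε => ?_
    obtain ⟨⟨hεl1, hεl2⟩, hεm1, hεm2⟩ := hε
    set p' : net.L → ℝ := fun k => pstar k + c k * ε with hp'
    have hcondε : ∀ k, net.t k < (1/2) * Real.log (1 + p' k / net.σ k) := by
      intro k
      by_cases h1 : k = l
      · subst h1; exact hεl2
      · by_cases h2 : k = m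
        · subst h2; exact hεm2
        · simpa [hp', hc0 k h1 h2] using hI k
    have hfeas : net.Feasible p' ystar := by
      refine ⟨hy, ?_, ?_⟩
      · intro k
        by_cases h1 : k = l
        · subst h1; exact hεl1.le
        · by_cases h2 : k = m
          · subst h2; exact hεm1.le
          · simpa [hp', hc0 k h1 h2] using hp k
      · intro n'
        have hs : (∑ k ∈ Finset.univ.filter (fun k => net.startD k = n'), p' k) =
            ∑ k ∈ Finset.univ.filter (fun k => net.startD k = n'), pstar k := by
          have hcsum : (∑ k ∈ Finset.univ.filter (fun k => net.startD k = n'), c k) = 0 := by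
            simp only [hc, Finset.sum_add_distrib, Finset.sum_ite_eq' _ l, Finset.sum_ite_eq' _ m,
              Finset.mem_filter, Finset.mem_univ, true_and, hl, hm]
            split_ifs <;> ring
          simp only [hp', Finset.sum_add_distrib, ← Finset.sum_mul, hcsum, zero_mul, add_zero]
        rw [hs]; exact hn n'
      -- compare delays
    have hd1 : net.Delay pstar = ENNReal.ofReal (F 0) := by
      rw [Net.Delay, if_pos hI, hFdef]
      norm_num
    have hd2 : net.Delay p' = ENNReal.ofReal (F ε) := by
      rw [Net.Delay, if_pos hcondε]
    have hFε : 0 ≤ F ε := by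
      refine Finset.sum_nonneg fun k _ => div_nonneg (net.ht k).le ?_
      exact (sub_pos.2 (hcondε k)).le
    have := hle2 p' ystar hfeas
    rw [hd1, hd2] at this
    exact (ENNReal.ofReal_le_ofReal_iff hFε).1 this
  have h0 : deriv F 0 = 0 := hloc.deriv_eq_zero
  rw [hder.deriv] at h0
  have := sub_eq_zero.1 h0
  simpa [hG] using this
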